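/- The identity $\Lambda_2' - \omega\Lambda_2 + \frac{1}{2}\Lambda_4 + \frac{1}{3}\alpha\Lambda_6 = 0$ holds. -/

import Mathlib

open MeasureTheory Set

lemma integrable_exp_neg_mul_abs' {k : ℝ} (hk : 0 < k) :
    Integrable (fun x : ℝ => Real.exp (-k * |x|)) := by
  set e : ℝ → ℝ := fun x => Real.exp (-k * |x|) with he
  have hA : MeasurableEmbedding (fun x : ℝ => -x) :=
    (Homeomorph.neg ℝ).isClosedEmbedding.measurableEmbedding
  have h1 : IntegrableOn e (Ioi 0) :=
    (exp_neg_integrableOn_Ioi 0 hk).congr_fun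
      (fun x hx => by simp [e, abs_of_pos (mem_Ioi.mp hx)]) measurableSet_Ioi
  have h2 : IntegrableOn e (Iic 0) := by
    have hmap : volume.restrict (Iic (0:ℝ))
        = Measure.map (fun x : ℝ => -x) (volume.restrict (Ici 0)) := by
      rw [← Measure.map_neg_eq_self (volume : Measure ℝ)]
      rw [Measure.restrict_map measurable_neg measurableSet_Iic]
      congr 1
      simp
    rw [IntegrableOn, hmap, hA.integrable_map_iff]
    have hee : (e ∘ fun x : ℝ => -x) = e := funext fun x => by simp [e]
    rw [hee]
    exact (integrableOn_Ici_iff_integrableOn_Ioi).mpr h1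
  rw [← integrableOn_univ, ← Iic_union_Ioi (a := (0:ℝ))]
  exact h2.union h1

lemma stmt3_alg (ω α β c k dz S H : ℝ) (hω : 0 < ω) (hβ : β = -(16 / 3) * α * ω)
    (hc2 : c ^ 2 = 1 - β) (hk2 : k ^ 2 = 4 * ω)
    (hch : H ^ 2 = 1 + S ^ 2) (hdz : dz = 1 + c * H) (hd0 : 0 < dz) :
    (4 * ω * (c * (S * k))) ^ 2 / (16 * ω * dz ^ 3)
      = ω * (4 * ω / dz) - 1 / 2 * (4 * ω / dz) ^ 2 - 1 / 3 * α * (4 * ω / dz) ^ 3 := by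
  have halg : c ^ 2 * S ^ 2 = dz ^ 2 - 2 * dz + β := by
    rw [hdz]; linear_combination (-(c^2)) * hch - hc2
  have hdne : dz ≠ 0 := hd0.ne'
  have key : c^2*S^2*k^2*ω/dz^3 = (4*ω^2*dz^2 - 8*ω^2*dz - 64/3*α*ω^3)/dz^3 := by
    congr 1
    linear_combination (ω*c^2*S^2)*hk2 + (4*ω^2)*halg + (4*ω^2)*hβ
  have hL : (4*ω*(c*(S*k)))^2/(16*ω*dz^3) = c^2*S^2*k^2*ω/dz^3 := by
    rw [div_eq_div_iff (by positivity) (by positivity)]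
    ring
  have hR : ω*(4*ω/dz) - 1/2*(4*ω/dz)^2 - 1/3*α*(4*ω/dz)^3
      = (4*ω^2*dz^2 - 8*ω^2*dz - 64/3*α*ω^3)/dz^3 := by
    field_simp
    ring
  rw [hL, key, ← hR]

theorem stmt3 (ω α β : ℝ) (hω : 0 < ω) (hβ : β = -(16 / 3) * α * ω)
    (hβ0 : 0 ≤ β) (hβ1 : β < 1)
    (R0 : ℝ → ℝ)
    (hR0 : ∀ z : ℝ, R0 z =
      Real.sqrt (4 * ω / (1 + Real.sqrt (1 - β) * Real.cosh (2 * Real.sqrt ω * z)))) :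
    (∫ s : ℝ, (deriv R0 s) ^ 2) - ω * (∫ s : ℝ, (R0 s) ^ 2)
      + (1 / 2) * (∫ s : ℝ, (R0 s) ^ 4) + (1 / 3) * α * (∫ s : ℝ, (R0 s) ^ 6) = 0 := by
  set c : ℝ := Real.sqrt (1 - β) with hc
  set k : ℝ := 2 * Real.sqrt ω with hk
  have hc0 : 0 < c := Real.sqrt_pos.mpr (by linarith)
  have hc2 : c ^ 2 = 1 - β := Real.sq_sqrt (by linarith)
  have hk0 : 0 < k := by
    rw [hk]; positivity
  have hk2 : k ^ 2 = 4 * ω := by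
    rw [hk, mul_pow, Real.sq_sqrt hω.le]; ring
  set d : ℝ → ℝ := fun z => 1 + c * Real.cosh (k * z) with hd
  have hd1 : ∀ z, 1 ≤ d z := fun z => by
    have h := Real.one_le_cosh (k * z)
    have : 0 ≤ c * Real.cosh (k * z) := by positivity
    simp only [hd]; linarith
  have hd0 : ∀ z, 0 < d z := fun z => lt_of_lt_of_le one_pos (hd1 z)
  have hF0 : ∀ z, 0 < 4 * ω / d z := fun z => by positivity
  have hfun : R0 = fun z => Real.sqrt (4 * ω / d z) := funext fun z => hR0 z
  have hR2 : ∀ z, R0 z ^ 2 = 4 * ω / d z := fun z => by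
    rw [hR0 z, Real.sq_sqrt (hF0 z).le]
  -- derivative
  have hder : ∀ z : ℝ, HasDerivAt R0
      ((0 * d z - 4 * ω * (c * (Real.sinh (k * z) * k))) / (d z) ^ 2
        * (1 / (2 * Real.sqrt (4 * ω / d z)))) z := by
    intro z
    have h1 : HasDerivAt (fun z : ℝ => k * z) k z := by
      simpa using (hasDerivAt_id z).const_mul k
    have h2 : HasDerivAt (fun z : ℝ => Real.cosh (k * z)) (Real.sinh (k * z) * k) z :=
      (Real.hasDerivAt_cosh (k * z)).comp z h1
    have h3 : HasDerivAt d (c * (Real.sinh (k * z) * k)) z := (h2.const_mul c).const_add 1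
    have h4 : HasDerivAt (fun z => 4 * ω / d z)
        ((0 * d z - 4 * ω * (c * (Real.sinh (k * z) * k))) / (d z) ^ 2) z :=
      (hasDerivAt_const z (4 * ω)).div h3 (hd0 z).ne'
    have h5 := (Real.hasDerivAt_sqrt (hF0 z).ne').comp z h4
    rw [hfun]
    simpa [mul_comm, Function.comp_def] using h5
  -- pointwise identity
  have hkey : ∀ z : ℝ, (deriv R0 z) ^ 2
      = ω * (R0 z) ^ 2 - 1 / 2 * (R0 z) ^ 4 - 1 / 3 * α * (R0 z) ^ 6 := by
    intro z
    rw [(hder z).deriv]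
    have hs2 : Real.sqrt (4 * ω / d z) ^ 2 = 4 * ω / d z := Real.sq_sqrt (hF0 z).le
    have h4 : (R0 z) ^ 4 = (4 * ω / d z) ^ 2 := by
      rw [show (R0 z)^4 = ((R0 z)^2)^2 by ring, hR2]
    have h6 : (R0 z) ^ 6 = (4 * ω / d z) ^ 3 := by
      rw [show (R0 z)^6 = ((R0 z)^2)^3 by ring, hR2]
    have hv : ((0 * d z - 4 * ω * (c * (Real.sinh (k * z) * k))) / (d z) ^ 2
        * (1 / (2 * Real.sqrt (4 * ω / d z)))) ^ 2
        = (4 * ω * (c * (Real.sinh (k * z) * k))) ^ 2 / (16 * ω * (d z) ^ 3) := by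
      rw [mul_pow, div_pow, div_pow, mul_pow, hs2]
      field_simp
      ring
    rw [hv, hR2, h4, h6]
    exact stmt3_alg ω α β c k (d z) (Real.sinh (k * z)) (Real.cosh (k * z)) hω hβ hc2 hk2
      (by have := Real.cosh_sq_sub_sinh_sq (k * z); linarith) rfl (hd0 z)
  -- integrability
  have he := integrable_exp_neg_mul_abs' hk0
  have hcontd : Continuous d :=
    continuous_const.add (continuous_const.mul
      (Real.continuous_cosh.comp (continuous_const.mul continuous_id)))
  have hcontF : Continuous fun z => 4 * ω / d z :=
    continuous_const.div hcontd fun z => (hd0 z).ne'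
  have hcontR : Continuous R0 := by
    rw [hfun]; exact hcontF.sqrt
  have hdlb : ∀ z : ℝ, c / 2 * Real.exp (k * |z|) ≤ d z := by
    intro z
    have h1 : Real.cosh (k * z) = Real.cosh (k * |z|) := by
      rcases abs_choice z with h | h
      · rw [h]
      · rw [h]; rw [show k * -z = -(k * z) by ring, Real.cosh_neg]
    have h2 : Real.exp (k * |z|) / 2 ≤ Real.cosh (k * |z|) := by
      rw [Real.cosh_eq]
      have := Real.exp_pos (-(k * |z|))
      linarith
    have h3 : c / 2 * Real.exp (k * |z|) ≤ c * Real.cosh (k * z) := by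
      rw [h1]
      calc c / 2 * Real.exp (k * |z|) = c * (Real.exp (k * |z|) / 2) := by ring
        _ ≤ c * Real.cosh (k * |z|) := mul_le_mul_of_nonneg_left h2 hc0.le
    show c / 2 * Real.exp (k * |z|) ≤ 1 + c * Real.cosh (k * z)
    linarith
  have hbound2 : ∀ z : ℝ, (R0 z) ^ 2 ≤ 8 * ω / c * Real.exp (-k * |z|) := by
    intro z
    rw [hR2]
    have hE : 0 < Real.exp (k * |z|) := Real.exp_pos _
    have hlb : 0 < c / 2 * Real.exp (k * |z|) := by positivity
    calc 4 * ω / d z ≤ 4 * ω / (c / 2 * Real.exp (k * |z|)) :=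
          div_le_div_of_nonneg_left (by positivity) hlb (hdlb z)
      _ = 8 * ω / c * Real.exp (-k * |z|) := by
          rw [show -k * |z| = -(k * |z|) by ring, Real.exp_neg]
          field_simp
          ring
  have hint2 : Integrable fun z : ℝ => (R0 z) ^ 2 := by
    refine (he.const_mul (8 * ω / c)).mono' ((hcontR.pow 2).aestronglyMeasurable) ?_
    filter_upwards with z
    rw [Real.norm_eq_abs, abs_of_nonneg (sq_nonneg _)]
    exact hbound2 z
  have hle2 : ∀ z : ℝ, (R0 z) ^ 2 ≤ 4 * ω := fun z => by
    rw [hR2]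
    calc 4 * ω / d z ≤ 4 * ω / 1 := div_le_div_of_nonneg_left (by positivity) one_pos (hd1 z)
      _ = 4 * ω := by ring
  have hint4 : Integrable fun z : ℝ => (R0 z) ^ 4 := by
    refine (hint2.const_mul (4 * ω)).mono' ((hcontR.pow 4).aestronglyMeasurable) ?_
    filter_upwards with z
    rw [Real.norm_eq_abs, abs_of_nonneg (by positivity)]
    calc (R0 z) ^ 4 = (R0 z)^2 * (R0 z)^2 := by ring
      _ ≤ 4 * ω * (R0 z)^2 := mul_le_mul_of_nonneg_right (hle2 z) (sq_nonneg _)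
  have hint6 : Integrable fun z : ℝ => (R0 z) ^ 6 := by
    refine (hint4.const_mul (4 * ω)).mono' ((hcontR.pow 6).aestronglyMeasurable) ?_
    filter_upwards with z
    rw [Real.norm_eq_abs, abs_of_nonneg (by positivity)]
    calc (R0 z) ^ 6 = (R0 z)^2 * (R0 z)^4 := by ring
      _ ≤ 4 * ω * (R0 z)^4 := mul_le_mul_of_nonneg_right (hle2 z) (by positivity)
  -- conclude
  have hptw : (fun s : ℝ => (deriv R0 s) ^ 2)
      = fun s : ℝ => ω * (R0 s) ^ 2 - 1 / 2 * (R0 s) ^ 4 - 1 / 3 * α * (R0 s) ^ 6 :=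
    funext hkey
  have h12 : Integrable (fun s : ℝ => ω * (R0 s) ^ 2 - 1 / 2 * (R0 s) ^ 4) := by
    have := (hint2.const_mul ω).sub (hint4.const_mul (1/2))
    exact this
  have h6i : Integrable (fun s : ℝ => 1 / 3 * α * (R0 s) ^ 6) := by
    simpa [mul_assoc] using hint6.const_mul (1/3 * α)
  rw [hptw, integral_sub h12 h6i, integral_sub (hint2.const_mul ω) (hint4.const_mul (1/2)),
      integral_const_mul, integral_const_mul, integral_const_mul]
  ring
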